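/- Let p be a prime, q a power of p, and α an algebraic number such that α is an algebraic integer and α is a unit at every finite place not above p. Suppose every complex absolute value of α equals q^{w/2} for some integer w (α is a q-Weil number of weight w) and every q-slope of α lies in [0, i] for an integer i ≥ 0. Then w ≤ 2i and w ≥ 0. -/

import Mathlib

section Aux
variable {p : ℕ} [Fact p.Prime]

lemma aux_v_one (v : AlgebraicClosure ℚ_[p] → ℝ)
    (hvmul : ∀ x y : AlgebraicClosure ℚ_[p], x ≠ 0 → y ≠ 0 → v (x * y) = v x + v y) :
    v 1 = 0 := by
  have h := hvmul 1 1 one_ne_zero one_ne_zero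
  simp only [mul_one] at h; linarith

lemma aux_v_neg (v : AlgebraicClosure ℚ_[p] → ℝ)
    (hvmul : ∀ x y : AlgebraicClosure ℚ_[p], x ≠ 0 → y ≠ 0 → v (x * y) = v x + v y)
    (x : AlgebraicClosure ℚ_[p]) (hx : x ≠ 0) : v (-x) = v x := by
  have h1 : v ((-1 : AlgebraicClosure ℚ_[p]) * (-1)) = v (-1) + v (-1) :=
    hvmul _ _ (by norm_num) (by norm_num)
  rw [neg_mul_neg, one_mul, aux_v_one v hvmul] at h1
  have h2 := hvmul (-1) x (by norm_num) hx
  rw [neg_one_mul] at h2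
  linarith

lemma aux_v_pow (v : AlgebraicClosure ℚ_[p] → ℝ)
    (hvmul : ∀ x y : AlgebraicClosure ℚ_[p], x ≠ 0 → y ≠ 0 → v (x * y) = v x + v y)
    (x : AlgebraicClosure ℚ_[p]) (hx : x ≠ 0) (k : ℕ) :
    v (x ^ k) = (k : ℝ) * v x := by
  induction k with
  | zero => simp [aux_v_one v hvmul]
  | succ k ih =>
    rw [pow_succ, hvmul _ _ (pow_ne_zero _ hx) hx, ih]
    push_cast; ring

lemma aux_v_prod (v : AlgebraicClosure ℚ_[p] → ℝ)
    (hvmul : ∀ x y : AlgebraicClosure ℚ_[p], x ≠ 0 → y ≠ 0 → v (x * y) = v x + v y)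
    {ι : Type*} (s : Finset ι) (f : ι → AlgebraicClosure ℚ_[p])
    (hf : ∀ j ∈ s, f j ≠ 0) : v (∏ j ∈ s, f j) = ∑ j ∈ s, v (f j) := by
  classical
  induction s using Finset.induction_on with
  | empty => simp [aux_v_one v hvmul]
  | @insert a s ha ih =>
    rw [Finset.prod_insert ha, Finset.sum_insert ha,
      hvmul _ _ (hf a (Finset.mem_insert_self a s))
        (Finset.prod_ne_zero_iff.2 fun j hj => hf j (Finset.mem_insert_of_mem hj)),
      ih (fun j hj => hf j (Finset.mem_insert_of_mem hj))]

end Aux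

theorem stmt_14 (p : ℕ) [Fact p.Prime] (r : ℕ) (hr : 0 < r) (q : ℕ) (hq : q = p ^ r)
    {E : Type*} [Field E] [Algebra ℚ E] [FiniteDimensional ℚ E]
    (α : E) (hgen : Algebra.adjoin ℚ {α} = ⊤) (w : ℤ)
    (hWeil : ∀ σ : E →+* ℂ, ‖σ α‖ = (q : ℝ) ^ ((w : ℝ) / 2))
    (hint : IsIntegral ℤ α)
    (hunit : ∃ m : ℕ, IsIntegral ℤ ((p : E) ^ m * α⁻¹))
    (v : AlgebraicClosure ℚ_[p] → ℝ)
    (hvmul : ∀ x y : AlgebraicClosure ℚ_[p], x ≠ 0 → y ≠ 0 → v (x * y) = v x + v y)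
    (hvadd : ∀ x y : AlgebraicClosure ℚ_[p],
      x ≠ 0 → y ≠ 0 → x + y ≠ 0 → min (v x) (v y) ≤ v (x + y))
    (hvp : ∀ x : ℚ_[p], x ≠ 0 →
      v (algebraMap ℚ_[p] (AlgebraicClosure ℚ_[p]) x) = (x.valuation : ℝ))
    (i : ℕ)
    (hslope : ∀ ι : E →+* AlgebraicClosure ℚ_[p],
      0 ≤ v (ι α) / (r : ℝ) ∧ v (ι α) / (r : ℝ) ≤ (i : ℝ)) :
    0 ≤ w ∧ w ≤ 2 * (i : ℤ) := by
  obtain ⟨m, hm⟩ := hunit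
  have hp : p.Prime := Fact.out
  have hp1R : (1:ℝ) < (p:ℝ) := by exact_mod_cast hp.one_lt
  have hpR : (0:ℝ) < (p:ℝ) := by positivity
  have hq0 : (0:ℝ) < (q:ℝ) := by
    have : 0 < q := hq ▸ pow_pos hp.pos r
    exact_mod_cast this
  set n := Module.finrank ℚ E with hn
  have hn0 : 0 < n := Module.finrank_pos
  have hcardC : Fintype.card (E →ₐ[ℚ] ℂ) = n := AlgHom.card ℚ E ℂ
  have hne : Nonempty (E →ₐ[ℚ] ℂ) := by
    rw [← Fintype.card_pos_iff, hcardC]; exact hn0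
  obtain ⟨σ₀⟩ := hne
  have hα0 : α ≠ 0 := by
    intro h
    have h2 := hWeil σ₀.toRingHom
    rw [h, map_zero, norm_zero] at h2
    exact absurd h2.symm (ne_of_gt (Real.rpow_pos_of_pos hq0 _))
  have hN0 : Algebra.norm ℚ α ≠ 0 := (Algebra.norm_ne_zero_iff).2 hα0
  -- Step A: complex absolute value of the norm
  have hCabs : |((Algebra.norm ℚ α : ℚ) : ℝ)| = (p:ℝ) ^ (((r:ℝ) * (w:ℝ) * (n:ℝ)) / 2) := by
    have hC : algebraMap ℚ ℂ (Algebra.norm ℚ α) = ∏ σ : E →ₐ[ℚ] ℂ, σ α :=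
      Algebra.norm_eq_prod_embeddings ℚ ℂ α
    have habs : ‖algebraMap ℚ ℂ (Algebra.norm ℚ α)‖ = ∏ σ : E →ₐ[ℚ] ℂ, ‖σ α‖ := by
      rw [hC, norm_prod]
    have h1 : ‖algebraMap ℚ ℂ (Algebra.norm ℚ α)‖ = |((Algebra.norm ℚ α : ℚ) : ℝ)| := by
      rw [show (algebraMap ℚ ℂ (Algebra.norm ℚ α)) = (((Algebra.norm ℚ α : ℚ) :ℝ):ℂ) by push_cast; norm_cast]
      rw [Complex.norm_real, Real.norm_eq_abs]
    have h2 : ∀ σ : E →ₐ[ℚ] ℂ, ‖σ α‖ = (q:ℝ) ^ ((w:ℝ)/2) := fun σ =>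
      hWeil σ.toRingHom
    rw [h1, Finset.prod_congr rfl (fun σ _ => h2 σ), Finset.prod_const,
      Finset.card_univ, hcardC] at habs
    rw [habs, hq]
    rw [show ((p^r : ℕ) : ℝ) = (p:ℝ)^(r:ℕ) by push_cast; ring, ← Real.rpow_natCast (p:ℝ) r,
      ← Real.rpow_mul hpR.le, ← Real.rpow_natCast _ n, ← Real.rpow_mul hpR.le]
    ring_nf
  -- Step B/C: the norm is an integer dividing a power of p
  obtain ⟨z, hz⟩ := IsIntegrallyClosed.isIntegral_iff.1 (Algebra.isIntegral_norm ℚ hint)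
  obtain ⟨z', hz'⟩ := IsIntegrallyClosed.isIntegral_iff.1 (Algebra.isIntegral_norm ℚ hm)
  have hdvd : z ∣ (p:ℤ)^(m*n) := by
    refine ⟨z', ?_⟩
    have hmul : Algebra.norm ℚ α * Algebra.norm ℚ ((p:E)^m * α⁻¹) = (p:ℚ)^(m*n) := by
      rw [← map_mul]
      have h1 : α * ((p:E)^m * α⁻¹) = (p:E)^m := by field_simp
      rw [h1, show ((p:E))^m = algebraMap ℚ E ((p:ℚ)^m) by push_cast; norm_cast,
        Algebra.norm_algebraMap, ← pow_mul]
    have h2 : ((z * z' : ℤ) : ℚ) = (((p:ℤ)^(m*n) : ℤ) : ℚ) := by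
      push_cast
      rw [show ((z:ℚ)) = Algebra.norm ℚ α from hz, show ((z':ℚ)) = _ from hz', hmul]
    exact_mod_cast h2.symm
  have hz0 : z ≠ 0 := by
    intro h; apply hN0; rw [← hz, h, map_zero]
  have hdvdn : z.natAbs ∣ p ^ (m * n) := by
    have h := Int.natAbs_dvd_natAbs.2 hdvd
    rwa [Int.natAbs_pow, Int.natAbs_natCast] at h
  obtain ⟨k, hk_le, hkz⟩ := (Nat.dvd_prime_pow hp).1 hdvdn
  -- |N| = p^k, hence k = r*w*n/2
  have hNabs : |((Algebra.norm ℚ α : ℚ) : ℝ)| = (p:ℝ)^(k:ℕ) := by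
    have h1 : ((Algebra.norm ℚ α : ℚ) : ℝ) = (z:ℝ) := by
      rw [← hz]; simp
    have h2 : |(z:ℝ)| = ((z.natAbs : ℕ) : ℝ) := by
      rw [← Int.cast_abs]; exact (Nat.cast_natAbs (α := ℝ) z).symm
    rw [h1, h2, hkz]
    push_cast; ring
  have hkval : (k:ℝ) = (r:ℝ) * (w:ℝ) * (n:ℝ) / 2 := by
    have h1 : (p:ℝ) ^ ((k:ℕ):ℝ) = (p:ℝ) ^ (((r:ℝ) * (w:ℝ) * (n:ℝ)) / 2) := by
      rw [Real.rpow_natCast, ← hNabs, hCabs]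
    have h2 := Real.rpow_le_rpow_left_iff (y := ((k:ℕ):ℝ))
      (z := ((r:ℝ) * (w:ℝ) * (n:ℝ)) / 2) hp1R
    have h3 := Real.rpow_le_rpow_left_iff (z := ((k:ℕ):ℝ))
      (y := ((r:ℝ) * (w:ℝ) * (n:ℝ)) / 2) hp1R
    exact le_antisymm (h2.1 h1.le) (h3.1 h1.ge)
  -- Step E: p-adic valuation of the norm
  have hcomp : (algebraMap ℚ (AlgebraicClosure ℚ_[p])) = ((algebraMap ℚ_[p] (AlgebraicClosure ℚ_[p])).comp (algebraMap ℚ ℚ_[p])) :=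
    Subsingleton.elim _ _
  have hvalgp : v (algebraMap ℚ (AlgebraicClosure ℚ_[p]) (p:ℚ)) = 1 := by
    have h1 : algebraMap ℚ (AlgebraicClosure ℚ_[p]) (p:ℚ)
        = algebraMap ℚ_[p] (AlgebraicClosure ℚ_[p]) (p:ℚ_[p]) := by
      rw [hcomp]; simp only [RingHom.comp_apply, map_natCast]
    rw [h1, hvp (p:ℚ_[p]) (by exact_mod_cast hp.ne_zero), Padic.valuation_p]
    norm_num
  have halgp0 : algebraMap ℚ (AlgebraicClosure ℚ_[p]) (p:ℚ) ≠ 0 := by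
    simp only [map_ne_zero]
    exact_mod_cast hp.ne_zero
  have hvN : v (algebraMap ℚ (AlgebraicClosure ℚ_[p]) (Algebra.norm ℚ α)) = (k:ℝ) := by
    rcases Int.natAbs_eq z with h | h
    · have hrw : Algebra.norm ℚ α = (p:ℚ)^k := by
        rw [← hz, h, hkz]; push_cast; ring
      rw [hrw, map_pow, aux_v_pow v hvmul _ halgp0, hvalgp, mul_one]
    · have hrw : Algebra.norm ℚ α = -((p:ℚ)^k) := by
        rw [← hz, h, hkz]; push_cast; ring
      rw [hrw, map_neg, map_pow, aux_v_neg v hvmul _ (pow_ne_zero _ halgp0),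
        aux_v_pow v hvmul _ halgp0, hvalgp, mul_one]
  have hcardP : Fintype.card (E →ₐ[ℚ] (AlgebraicClosure ℚ_[p])) = n := AlgHom.card ℚ E (AlgebraicClosure ℚ_[p])
  have hP : algebraMap ℚ (AlgebraicClosure ℚ_[p]) (Algebra.norm ℚ α) = ∏ σ : E →ₐ[ℚ] (AlgebraicClosure ℚ_[p]), σ α :=
    Algebra.norm_eq_prod_embeddings ℚ (AlgebraicClosure ℚ_[p]) α
  have hterm0 : ∀ σ : E →ₐ[ℚ] (AlgebraicClosure ℚ_[p]), σ α ≠ 0 := fun σ => by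
    simp only [map_ne_zero]; exact hα0
  have hsum : v (algebraMap ℚ (AlgebraicClosure ℚ_[p]) (Algebra.norm ℚ α)) = ∑ σ : E →ₐ[ℚ] (AlgebraicClosure ℚ_[p]), v (σ α) := by
    rw [hP]; exact aux_v_prod v hvmul _ _ (fun σ _ => hterm0 σ)
  have hbound : ∀ σ : E →ₐ[ℚ] (AlgebraicClosure ℚ_[p]), v (σ α) ≤ (r:ℝ) * (i:ℝ) := fun σ => by
    have h := (hslope σ.toRingHom).2
    have hr0 : (0:ℝ) < (r:ℝ) := by exact_mod_cast hr
    rw [div_le_iff₀ hr0] at h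
    calc v (σ α) ≤ (i:ℝ) * (r:ℝ) := h
    _ = (r:ℝ) * (i:ℝ) := by ring
  have hkle : (k:ℝ) ≤ (n:ℝ) * ((r:ℝ) * (i:ℝ)) := by
    rw [← hvN, hsum]
    calc (∑ σ : E →ₐ[ℚ] (AlgebraicClosure ℚ_[p]), v (σ α)) ≤ ∑ _σ : E →ₐ[ℚ] (AlgebraicClosure ℚ_[p]), (r:ℝ) * (i:ℝ) :=
      Finset.sum_le_sum (fun σ _ => hbound σ)
    _ = (n:ℝ) * ((r:ℝ) * (i:ℝ)) := by
      rw [Finset.sum_const, Finset.card_univ, hcardP, nsmul_eq_mul]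
  -- conclusion
  have hr0 : (0:ℝ) < (r:ℝ) := by exact_mod_cast hr
  have hn0R : (0:ℝ) < (n:ℝ) := by exact_mod_cast hn0
  have hk0 : (0:ℝ) ≤ (k:ℝ) := Nat.cast_nonneg k
  have hwnn : (0:ℝ) ≤ (w:ℝ) := by nlinarith [hkval, hk0, mul_pos hr0 hn0R]
  have hwle : (w:ℝ) ≤ 2 * (i:ℝ) := by nlinarith [hkval, hkle, mul_pos hr0 hn0R]
  constructor
  · exact_mod_cast hwnn
  · exact_mod_cast hwle
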